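/- Let p(z) = p_N z^N + ... + p_0 be a Hurwitz stable real polynomial of even degree N with p_N ≥ 1 and p_0 ≥ 1. Then the sum of its coefficients is at least 2^{N/2}. -/

import Mathlib

open Polynomial

lemma key_root_ineq (z : ℂ) (hz : z.re < 0) :
    2 * ‖z‖ ≤ (‖1 - z‖)^2 := by
  have h1 : (‖1 - z‖)^2 = (1 - z.re)^2 + z.im^2 := by
    rw [Complex.sq_norm, Complex.normSq_apply]
    simp [Complex.sub_re, Complex.sub_im]
    ring
  have h2 : (‖z‖)^2 = z.re^2 + z.im^2 := by
    rw [Complex.sq_norm, Complex.normSq_apply]; ring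
  have h3 : 0 ≤ ‖z‖ := norm_nonneg z
  nlinarith [sq_nonneg (‖z‖ - 1)]

lemma multiset_prod_bound (s : Multiset ℂ) (hs : ∀ z ∈ s, z.re < 0) :
    2 ^ Multiset.card s * (s.map fun z => ‖z‖).prod ≤
      ((s.map fun z => ‖1 - z‖).prod)^2 := by
  induction s using Multiset.induction with
  | empty => simp
  | cons a t ih =>
    have ha : a.re < 0 := hs a (Multiset.mem_cons_self a t)
    have ht : ∀ z ∈ t, z.re < 0 := fun z hz => hs z (Multiset.mem_cons_of_mem hz)
    have iht := ih ht
    simp only [Multiset.map_cons, Multiset.prod_cons, Multiset.card_cons]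
    rw [pow_succ, mul_pow]
    have h1 : 0 ≤ 2 ^ Multiset.card t * (Multiset.map (fun z => ‖z‖) t).prod := by
      apply mul_nonneg (by positivity)
      apply Multiset.prod_nonneg
      intro x hx
      simp only [Multiset.mem_map] at hx
      obtain ⟨z, _, rfl⟩ := hx
      exact norm_nonneg _
    have h2 := key_root_ineq a ha
    calc 2 ^ Multiset.card t * 2 * (‖a‖ * (Multiset.map (fun z => ‖z‖) t).prod)
        = (2 * ‖a‖) * (2 ^ Multiset.card t * (Multiset.map (fun z => ‖z‖) t).prod) := by ring
      _ ≤ (‖1 - a‖)^2 * ((Multiset.map (fun z => ‖1 - z‖) t).prod)^2 := by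
          apply mul_le_mul h2 iht h1 (by positivity)

lemma eval_coe_real (p : ℝ[X]) (x : ℝ) :
    (p.map (algebraMap ℝ ℂ)).eval (x:ℂ) = ((p.eval x : ℝ) : ℂ) := by
  rw [Polynomial.eval_map, show ((x:ℂ)) = algebraMap ℝ ℂ x from rfl,
    Polynomial.eval₂_at_apply]
  rfl

theorem coeff_sum_lower_bound (N : ℕ) (hNe : Even N) (p : ℝ[X])
    (hdeg : p.natDegree = N) (hlead : 1 ≤ p.leadingCoeff) (hconst : 1 ≤ p.coeff 0)
    (hstab : ∀ z : ℂ, (p.map (algebraMap ℝ ℂ)).IsRoot z → z.re < 0) :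
    (2 : ℝ) ^ (N / 2) ≤ ∑ i ∈ Finset.range (N + 1), p.coeff i := by
  have hp0 : p ≠ 0 := by
    intro h
    rw [h] at hlead
    simp at hlead
    linarith
  set q := p.map (algebraMap ℝ ℂ) with hqdef
  have hq0 : q ≠ 0 := by
    rw [hqdef]
    exact (Polynomial.map_ne_zero_iff (algebraMap ℝ ℂ).injective).mpr hp0
  have hsum : ∑ i ∈ Finset.range (N + 1), p.coeff i = p.eval 1 := by
    rw [Polynomial.eval_eq_sum_range, hdeg]
    simp
  rw [hsum]
  -- every real root is negative
  have hrealroot : ∀ x : ℝ, p.eval x = 0 → x < 0 := by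
    intro x hx
    have : q.IsRoot (x : ℂ) := by
      rw [hqdef, Polynomial.IsRoot, eval_coe_real, hx]
      simp
    have := hstab x this
    simpa using this
  -- positivity of p.eval 1
  have hpos : 0 < p.eval 1 := by
    by_contra h
    push_neg at h
    have hcont : ContinuousOn (fun x => p.eval x) (Set.Icc (0:ℝ) 1) :=
      (Polynomial.continuous p).continuousOn
    have h0 : (0:ℝ) ∈ Set.Icc (p.eval 1) (p.eval 0) := by
      constructor
      · exact h
      · rw [← Polynomial.coeff_zero_eq_eval_zero]; linarith
    obtain ⟨x, hx, hroot⟩ := intermediate_value_Icc' (by norm_num : (0:ℝ) ≤ 1) hcont h0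
    have := hrealroot x hroot
    linarith [hx.1]
  -- factorization over ℂ
  have hsplit : q.Splits := IsAlgClosed.splits q
  have hqdeg : q.natDegree = N := by
    rw [hqdef, Polynomial.natDegree_map_eq_of_injective (algebraMap ℝ ℂ).injective, hdeg]
  have hcard : Multiset.card q.roots = N := by
    rw [← hqdeg]
    exact Polynomial.splits_iff_card_roots.mp hsplit
  have hfac : q = Polynomial.C q.leadingCoeff * (q.roots.map fun z => Polynomial.X - Polynomial.C z).prod :=
    hsplit.eq_prod_roots
  have hL : q.leadingCoeff = (p.leadingCoeff : ℂ) := by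
    rw [hqdef]
    exact Polynomial.leadingCoeff_map_of_leadingCoeff_ne_zero _ (by
      intro h
      rw [_root_.map_eq_zero] at h
      rw [h] at hlead; linarith)
  -- eval at 1 and 0
  have heval1 : q.eval 1 = (p.leadingCoeff : ℂ) * (q.roots.map fun z => 1 - z).prod := by
    conv_lhs => rw [hfac]
    rw [Polynomial.eval_mul, Polynomial.eval_C, hL, Polynomial.eval_multiset_prod,
      Multiset.map_map]
    simp
  have heval0 : q.eval 0 = (p.leadingCoeff : ℂ) * (q.roots.map fun z => -z).prod := by
    conv_lhs => rw [hfac]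
    rw [Polynomial.eval_mul, Polynomial.eval_C, hL, Polynomial.eval_multiset_prod,
      Multiset.map_map]
    simp
  -- norms
  have habs1 : |p.eval 1| = p.leadingCoeff * (q.roots.map fun z => ‖1 - z‖).prod := by
    have : ‖q.eval 1‖ = p.leadingCoeff * (q.roots.map fun z => ‖1 - z‖).prod := by
      rw [heval1, norm_mul, Complex.norm_real, Real.norm_eq_abs, abs_of_pos (by linarith : (0:ℝ) < p.leadingCoeff)]
      congr 1
      exact (Multiset.prod_hom' q.roots (normHom : ℂ →*₀ ℝ) (fun z => 1 - z)).symm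
    have hq1 : q.eval 1 = ((p.eval 1 : ℝ) : ℂ) := by
      rw [hqdef, show (1:ℂ) = ((1:ℝ):ℂ) by norm_num]
      exact eval_coe_real p 1
    rw [← this, hq1, Complex.norm_real, Real.norm_eq_abs]
  have habs0 : p.coeff 0 = p.leadingCoeff * (q.roots.map fun z => ‖z‖).prod := by
    have h1 : ‖q.eval 0‖ = p.leadingCoeff * (q.roots.map fun z => ‖z‖).prod := by
      rw [heval0, norm_mul, Complex.norm_real, Real.norm_eq_abs, abs_of_pos (by linarith : (0:ℝ) < p.leadingCoeff)]
      congr 1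
      refine (Multiset.prod_hom' q.roots (normHom : ℂ →*₀ ℝ) (fun z => -z)).symm.trans ?_
      simp
    have h2 : ‖q.eval 0‖ = |p.eval 0| := by
      have hq00 : q.eval 0 = ((p.eval 0 : ℝ) : ℂ) := by
        rw [hqdef, show (0:ℂ) = ((0:ℝ):ℂ) by norm_num]
        exact eval_coe_real p 0
      rw [hq00, Complex.norm_real, Real.norm_eq_abs]
    rw [← h1, h2, ← Polynomial.coeff_zero_eq_eval_zero, abs_of_pos (by linarith)]
  -- roots have negative real part
  have hroots : ∀ z ∈ q.roots, z.re < 0 := fun z hz =>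
    hstab z (Polynomial.isRoot_of_mem_roots hz)
  have hbound := multiset_prod_bound q.roots hroots
  rw [hcard] at hbound
  -- combine
  have hA : 0 ≤ (q.roots.map fun z => ‖1 - z‖).prod := by
    apply Multiset.prod_nonneg
    intro x hx
    simp only [Multiset.mem_map] at hx
    obtain ⟨z, _, rfl⟩ := hx
    exact norm_nonneg _
  have hB : 0 ≤ (q.roots.map fun z => ‖z‖).prod := by
    apply Multiset.prod_nonneg
    intro x hx
    simp only [Multiset.mem_map] at hx
    obtain ⟨z, _, rfl⟩ := hx
    exact norm_nonneg _
  have hsq : (2:ℝ)^N ≤ (p.eval 1)^2 := by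
    have h1 : (p.eval 1)^2 = |p.eval 1|^2 := (sq_abs _).symm
    rw [h1, habs1, mul_pow]
    have hPB : 1 ≤ p.leadingCoeff * (q.roots.map fun z => ‖z‖).prod := by
      rw [← habs0]; exact hconst
    calc (2:ℝ)^N = 2^N * 1 := by ring
      _ ≤ 2^N * (p.leadingCoeff * (p.leadingCoeff * (q.roots.map fun z => ‖z‖).prod)) := by
          apply mul_le_mul_of_nonneg_left _ (by positivity)
          nlinarith
      _ = (p.leadingCoeff)^2 * (2^N * (q.roots.map fun z => ‖z‖).prod) := by ring
      _ ≤ (p.leadingCoeff)^2 * ((q.roots.map fun z => ‖1 - z‖).prod)^2 := by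
          apply mul_le_mul_of_nonneg_left hbound (by positivity)
  -- conclude
  have hN2 : ((2:ℝ)^(N/2))^2 = 2^N := by
    rw [← pow_mul]
    congr 1
    exact Nat.div_mul_cancel hNe.two_dvd
  have h2 : ((2:ℝ)^(N/2))^2 ≤ (p.eval 1)^2 := by rw [hN2]; exact hsq
  have hfin : (2:ℝ)^(N/2) ≤ |p.eval 1| := by
    rw [← Real.sqrt_sq (by positivity : (0:ℝ) ≤ 2^(N/2)), ← Real.sqrt_sq_eq_abs]
    exact Real.sqrt_le_sqrt h2
  rwa [abs_of_pos hpos] at hfin
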